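/- Let M ∈ C^{n×n} be diagonalizable, M = V D V^{-1}, and define for each eigenvalue λ_i the eigenvalue condition number κ(λ_i) = ‖v_i‖‖w_i‖ where v_i, w_i are the corresponding right and left eigenvectors normalized so that w_i* v_i = 1. Then the eigenvector condition number satisfies κ_V(M) ≤ √(n Σ_{i=1}^n κ(λ_i)²). -/

import Mathlib

open Matrix

/-- Operator (ℓ²→ℓ²) norm of a complex matrix. -/
noncomputable def opNorm {m : Type*} [Fintype m] [DecidableEq m] (M : Matrix m m ℂ) : ℝ :=
  ‖LinearMap.toContinuousLinearMap (Matrix.toEuclideanLin M)‖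

/-- Eigenvector condition number: infimum of `‖V‖‖V⁻¹‖` over diagonalizations `M = VDV⁻¹`. -/
noncomputable def kappaV {n : ℕ} (M : Matrix (Fin n) (Fin n) ℂ) : ℝ :=
  sInf {x | ∃ V D : Matrix (Fin n) (Fin n) ℂ,
    IsUnit V ∧ D.IsDiag ∧ M = V * D * V⁻¹ ∧ x = opNorm V * opNorm V⁻¹}

/-- ℓ² norm of a vector. -/
noncomputable def vecNorm {n : ℕ} (x : Fin n → ℂ) : ℝ := Real.sqrt (∑ i, ‖x i‖ ^ 2)

lemma opNorm_le_frob {n : ℕ} (A : Matrix (Fin n) (Fin n) ℂ) :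
    opNorm A ≤ Real.sqrt (∑ i, ∑ j, ‖A i j‖ ^ 2) := by
  apply ContinuousLinearMap.opNorm_le_bound _ (Real.sqrt_nonneg _)
  intro x
  have hrow : ∀ i, ‖(A *ᵥ (WithLp.equiv 2 _) x) i‖ ≤ Real.sqrt (∑ j, ‖A i j‖ ^ 2) * ‖x‖ := by
    intro i
    set a : EuclideanSpace ℂ (Fin n) :=
      (WithLp.equiv 2 _).symm (fun j => starRingEnd ℂ (A i j)) with ha
    have h1 : (A *ᵥ (WithLp.equiv 2 _) x) i = inner ℂ a x := by
      simp [mulVec, dotProduct, PiLp.inner_apply, ha, WithLp.equiv_symm_apply, PiLp.toLp_apply,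
        RCLike.inner_apply, mul_comm]
    have h2 : ‖a‖ = Real.sqrt (∑ j, ‖A i j‖ ^ 2) := by
      rw [EuclideanSpace.norm_eq]
      simp [ha, WithLp.equiv_symm_apply, PiLp.toLp_apply]
    calc ‖(A *ᵥ (WithLp.equiv 2 _) x) i‖ = ‖(inner ℂ a x : ℂ)‖ := by rw [h1]
      _ ≤ ‖a‖ * ‖x‖ := norm_inner_le_norm a x
      _ = Real.sqrt (∑ j, ‖A i j‖ ^ 2) * ‖x‖ := by rw [h2]
  have hAx : Matrix.toEuclideanLin A x =
      (WithLp.equiv 2 (Fin n → ℂ)).symm (A *ᵥ (WithLp.equiv 2 _) x) :=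
    Matrix.toEuclideanLin_apply A x
  simp only [LinearMap.coe_toContinuousLinearMap']
  rw [hAx, EuclideanSpace.norm_eq]
  have : ∀ i, ‖((WithLp.equiv 2 (Fin n → ℂ)).symm (A *ᵥ (WithLp.equiv 2 _) x)) i‖ ^ 2 ≤
      (∑ j, ‖A i j‖ ^ 2) * ‖x‖ ^ 2 := by
    intro i
    rw [WithLp.equiv_symm_apply, PiLp.toLp_apply]
    calc ‖(A *ᵥ (WithLp.equiv 2 _) x) i‖ ^ 2 ≤ (Real.sqrt (∑ j, ‖A i j‖ ^ 2) * ‖x‖) ^ 2 :=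
          pow_le_pow_left₀ (norm_nonneg _) (hrow i) 2
      _ = (∑ j, ‖A i j‖ ^ 2) * ‖x‖ ^ 2 := by
          rw [mul_pow, Real.sq_sqrt (by positivity)]
  calc Real.sqrt (∑ i, ‖((WithLp.equiv 2 (Fin n → ℂ)).symm (A *ᵥ (WithLp.equiv 2 _) x)) i‖ ^ 2)
      ≤ Real.sqrt (∑ i, (∑ j, ‖A i j‖ ^ 2) * ‖x‖ ^ 2) :=
        Real.sqrt_le_sqrt (Finset.sum_le_sum fun i _ => this i)
    _ = Real.sqrt (∑ i, ∑ j, ‖A i j‖ ^ 2) * ‖x‖ := by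
        rw [← Finset.sum_mul, Real.sqrt_mul (by positivity), Real.sqrt_sq (norm_nonneg _)]

theorem stmt_5 (n : ℕ) (M V D : Matrix (Fin n) (Fin n) ℂ)
    (hV : IsUnit V) (hD : D.IsDiag) (hM : M = V * D * V⁻¹)
    (kappa : Fin n → ℝ)
    (hkappa : ∀ i, kappa i = vecNorm (fun k => V k i) * vecNorm (fun k => V⁻¹ i k)) :
    kappaV M ≤ Real.sqrt ((n : ℝ) * ∑ i, kappa i ^ 2) := by
  have hVdet : IsUnit V.det := (Matrix.isUnit_iff_isUnit_det V).mp hV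
  have hinv : V⁻¹ * V = 1 := Matrix.nonsing_inv_mul V hVdet
  -- column and row norms
  set c : Fin n → ℝ := fun i => vecNorm (fun k => V k i) with hc
  set d : Fin n → ℝ := fun i => vecNorm (fun k => V⁻¹ i k) with hd
  have hc2 : ∀ i, (c i) ^ 2 = ∑ k, ‖V k i‖ ^ 2 := fun i =>
    Real.sq_sqrt (Finset.sum_nonneg fun k _ => by positivity)
  have hd2 : ∀ i, (d i) ^ 2 = ∑ k, ‖V⁻¹ i k‖ ^ 2 := fun i =>
    Real.sq_sqrt (Finset.sum_nonneg fun k _ => by positivity)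
  have hcpos : ∀ i, 0 < c i := by
    intro i
    have h1 : ∑ k, V⁻¹ i k * V k i = 1 := by
      have := congrFun (congrFun hinv i) i
      simpa [Matrix.mul_apply, Matrix.one_apply] using this
    have : ∃ k, V k i ≠ 0 := by
      by_contra h
      push_neg at h
      simp [h] at h1
    obtain ⟨k, hk⟩ := this
    have : (0:ℝ) < ∑ k, ‖V k i‖ ^ 2 :=
      Finset.sum_pos' (fun k _ => by positivity)
        ⟨k, Finset.mem_univ k, pow_pos (norm_pos_iff.mpr hk) 2⟩
    exact Real.sqrt_pos.mpr this
  have hdpos : ∀ i, 0 < d i := by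
    intro i
    have h1 : ∑ k, V⁻¹ i k * V k i = 1 := by
      have := congrFun (congrFun hinv i) i
      simpa [Matrix.mul_apply, Matrix.one_apply] using this
    have : ∃ k, V⁻¹ i k ≠ 0 := by
      by_contra h
      push_neg at h
      simp [h] at h1
    obtain ⟨k, hk⟩ := this
    have : (0:ℝ) < ∑ k, ‖V⁻¹ i k‖ ^ 2 :=
      Finset.sum_pos' (fun k _ => by positivity)
        ⟨k, Finset.mem_univ k, pow_pos (norm_pos_iff.mpr hk) 2⟩
    exact Real.sqrt_pos.mpr this
  -- the rescaling
  set t : Fin n → ℝ := fun i => Real.sqrt (d i / c i) with ht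
  have htpos : ∀ i, 0 < t i := fun i =>
    Real.sqrt_pos.mpr (div_pos (hdpos i) (hcpos i))
  set s : Fin n → ℂ := fun i => (t i : ℂ) with hs
  have hsne : ∀ i, s i ≠ 0 := fun i => by
    simp [hs, Complex.ofReal_eq_zero]
    exact (htpos i).ne'
  have hsUnit : IsUnit (Matrix.diagonal s) := by
    rw [Matrix.isUnit_iff_isUnit_det, Matrix.det_diagonal]
    exact isUnit_iff_ne_zero.mpr (Finset.prod_ne_zero_iff.mpr fun i _ => hsne i)
  set V' : Matrix (Fin n) (Fin n) ℂ := V * Matrix.diagonal s with hV'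
  have hV'unit : IsUnit V' := hV.mul hsUnit
  have hsinv : Matrix.diagonal s * Matrix.diagonal (fun i => (s i)⁻¹) = 1 := by
    rw [Matrix.diagonal_mul_diagonal]
    have h : (fun i => s i * (s i)⁻¹) = fun _ => (1:ℂ) :=
      funext fun i => mul_inv_cancel₀ (hsne i)
    rw [h, Matrix.diagonal_one]
  have hV'inv : V'⁻¹ = Matrix.diagonal (fun i => (s i)⁻¹) * V⁻¹ := by
    apply Matrix.inv_eq_right_inv
    rw [hV']
    calc V * Matrix.diagonal s * (Matrix.diagonal (fun i => (s i)⁻¹) * V⁻¹)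
        = V * (Matrix.diagonal s * Matrix.diagonal (fun i => (s i)⁻¹)) * V⁻¹ := by noncomm_ring
      _ = V * V⁻¹ := by rw [hsinv, mul_one]
      _ = 1 := Matrix.mul_nonsing_inv V hVdet
  -- M = V' D V'⁻¹
  have hDdiag : Matrix.diagonal D.diag = D := hD.diagonal_diag
  have hMV' : M = V' * D * V'⁻¹ := by
    rw [hV'inv, hV', hM]
    have : Matrix.diagonal s * D * Matrix.diagonal (fun i => (s i)⁻¹) = D := by
      conv_lhs => rw [← hDdiag]
      rw [Matrix.diagonal_mul_diagonal, Matrix.diagonal_mul_diagonal]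
      have hfun : (fun i => s i * D.diag i * (s i)⁻¹) = D.diag := by
        funext i
        rw [mul_comm (s i) (D.diag i), mul_assoc, mul_inv_cancel₀ (hsne i), mul_one]
      rw [hfun, hDdiag]
    calc V * D * V⁻¹ = V * (Matrix.diagonal s * D * Matrix.diagonal (fun i => (s i)⁻¹)) * V⁻¹ := by
          rw [this]
      _ = V * Matrix.diagonal s * D * (Matrix.diagonal (fun i => (s i)⁻¹) * V⁻¹) := by
          noncomm_ring
  -- Frobenius norms of V' and V'⁻¹
  have hkap_nonneg : ∀ i, 0 ≤ kappa i := fun i => by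
    rw [hkappa i]
    exact mul_nonneg (Real.sqrt_nonneg _) (Real.sqrt_nonneg _)
  have hkap : ∀ i, kappa i = c i * d i := fun i => hkappa i
  have hfrobV' : (∑ i, ∑ j, ‖V' i j‖ ^ 2) = ∑ i, kappa i := by
    rw [Finset.sum_comm]
    apply Finset.sum_congr rfl
    intro j _
    have : ∀ i, ‖V' i j‖ ^ 2 = (t j) ^ 2 * ‖V i j‖ ^ 2 := by
      intro i
      rw [hV', Matrix.mul_diagonal]
      rw [norm_mul, mul_pow, hs]
      simp [Complex.norm_real, abs_of_pos (htpos j)]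
      try ring
    rw [Finset.sum_congr rfl fun i _ => this i, ← Finset.mul_sum, ← hc2 j,
      Real.sq_sqrt (le_of_lt (div_pos (hdpos j) (hcpos j))), hkap j]
    field_simp [(hcpos j).ne']
    try ring
  have hfrobV'inv : (∑ i, ∑ j, ‖V'⁻¹ i j‖ ^ 2) = ∑ i, kappa i := by
    apply Finset.sum_congr rfl
    intro i _
    have : ∀ j, ‖V'⁻¹ i j‖ ^ 2 = ((t i) ^ 2)⁻¹ * ‖V⁻¹ i j‖ ^ 2 := by
      intro j
      rw [hV'inv, Matrix.diagonal_mul]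
      rw [norm_mul, mul_pow, norm_inv, hs]
      simp [Complex.norm_real, abs_of_pos (htpos i)]
      try ring
    rw [Finset.sum_congr rfl fun j _ => this j, ← Finset.mul_sum, ← hd2 i,
      Real.sq_sqrt (le_of_lt (div_pos (hdpos i) (hcpos i))), hkap i]
    rw [inv_div]
    field_simp [(hdpos i).ne']
    try ring
  have hsum_nonneg : 0 ≤ ∑ i, kappa i := Finset.sum_nonneg fun i _ => hkap_nonneg i
  have hbound : opNorm V' * opNorm V'⁻¹ ≤ ∑ i, kappa i := by
    have h1 := opNorm_le_frob V'
    have h2 := opNorm_le_frob V'⁻¹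
    rw [hfrobV'] at h1
    rw [hfrobV'inv] at h2
    have hop1 : 0 ≤ opNorm V' := norm_nonneg _
    calc opNorm V' * opNorm V'⁻¹ ≤ Real.sqrt (∑ i, kappa i) * Real.sqrt (∑ i, kappa i) :=
          mul_le_mul h1 h2 (norm_nonneg _) (Real.sqrt_nonneg _)
      _ = ∑ i, kappa i := Real.mul_self_sqrt hsum_nonneg
  -- membership and sInf
  have hmem : opNorm V' * opNorm V'⁻¹ ∈ {x | ∃ V D : Matrix (Fin n) (Fin n) ℂ,
      IsUnit V ∧ D.IsDiag ∧ M = V * D * V⁻¹ ∧ x = opNorm V * opNorm V⁻¹} :=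
    ⟨V', D, hV'unit, hD, hMV', rfl⟩
  have hbdd : BddBelow {x | ∃ V D : Matrix (Fin n) (Fin n) ℂ,
      IsUnit V ∧ D.IsDiag ∧ M = V * D * V⁻¹ ∧ x = opNorm V * opNorm V⁻¹} := by
    refine ⟨0, fun x hx => ?_⟩
    obtain ⟨W, E, _, _, _, hxe⟩ := hx
    rw [hxe]
    exact mul_nonneg (norm_nonneg _) (norm_nonneg _)
  have hstep : kappaV M ≤ ∑ i, kappa i :=
    le_trans (csInf_le hbdd hmem) hbound
  refine le_trans hstep ?_
  rw [Real.le_sqrt hsum_nonneg]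
  have hcs : (∑ i, kappa i) ^ 2 ≤ ((Finset.univ : Finset (Fin n)).card : ℝ) * ∑ i, kappa i ^ 2 :=
    sq_sum_le_card_mul_sum_sq
  calc (∑ i, kappa i) ^ 2 ≤ ((Finset.univ : Finset (Fin n)).card : ℝ) * ∑ i, kappa i ^ 2 := hcs
    _ = (n : ℝ) * ∑ i, kappa i ^ 2 := by simp
  positivity
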